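/- Let L ⊆ ℂ²ⁿ be a positive Lagrangian subspace with associated Ω-compatible complex structure J_L (so L = ker P_{J_L}), and let S ∈ Sp(2n,ℂ) be such that SL is also positive Lagrangian, with associated complex structure J_{SL}. Then the real matrix A := Re S − (Im S) J_L is invertible and J_{SL} = A J_L A⁻¹; moreover G_{SL} := Ω J_{SL} satisfies G_{SL} = Ω A Ωᵀ G_L (A)⁻¹ where G_L = Ω J_L. -/

import Mathlib

open Matrix

noncomputable section

/-- The standard symplectic matrix `Ω = [[0, −I],[I, 0]]` on `ℝ²ⁿ`. -/
def Omg (n : ℕ) : Matrix (Fin n ⊕ Fin n) (Fin n ⊕ Fin n) ℝ :=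
  fromBlocks 0 (-1) 1 0

/-- The complexification of `Ω`. -/
def OmgC (n : ℕ) : Matrix (Fin n ⊕ Fin n) (Fin n ⊕ Fin n) ℂ :=
  (Omg n).map Complex.ofReal

/-- Componentwise real part of a complex matrix. -/
def matRe {m k : Type*} (A : Matrix m k ℂ) : Matrix m k ℝ := A.map Complex.re

/-- Componentwise imaginary part of a complex matrix. -/
def matIm {m k : Type*} (A : Matrix m k ℂ) : Matrix m k ℝ := A.map Complex.im

/-- Componentwise real part of a complex vector. -/
def vecRe {m : Type*} (z : m → ℂ) : m → ℝ := fun i => (z i).re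

/-- Componentwise imaginary part of a complex vector. -/
def vecIm {m : Type*} (z : m → ℂ) : m → ℝ := fun i => (z i).im

/-- The projection `P_J(z) = Re z + J Im z` from `ℂ²ⁿ` to `ℝ²ⁿ`. -/
def PJ {n : ℕ} (J : Matrix (Fin n ⊕ Fin n) (Fin n ⊕ Fin n) ℝ)
    (z : Fin n ⊕ Fin n → ℂ) : Fin n ⊕ Fin n → ℝ :=
  vecRe z + J *ᵥ vecIm z


lemma vecRe_mulVec {m : Type*} [Fintype m] (M : Matrix m m ℂ) (z : m → ℂ) :
    vecRe (M *ᵥ z) = matRe M *ᵥ vecRe z - matIm M *ᵥ vecIm z := by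
  funext i
  simp [vecRe, vecIm, matRe, matIm, mulVec, dotProduct, Complex.re_sum,
    Complex.mul_re, Finset.sum_sub_distrib]

lemma vecIm_mulVec {m : Type*} [Fintype m] (M : Matrix m m ℂ) (z : m → ℂ) :
    vecIm (M *ᵥ z) = matRe M *ᵥ vecIm z + matIm M *ᵥ vecRe z := by
  funext i
  simp [vecRe, vecIm, matRe, matIm, mulVec, dotProduct, Complex.im_sum,
    Complex.mul_im, Finset.sum_add_distrib]

lemma omg_sq' {R : Type*} [CommRing R] (m : ℕ) :
    (fromBlocks (0 : Matrix (Fin m) (Fin m) R) (-1) 1 0) *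
      (fromBlocks (0 : Matrix (Fin m) (Fin m) R) (-1) 1 0) =
      (-1 : Matrix (Fin m ⊕ Fin m) (Fin m ⊕ Fin m) R) := by
  rw [fromBlocks_multiply]
  ext (i|i) (j|j) <;>
    simp [fromBlocks, one_apply]

lemma omgC_eq (n : ℕ) : OmgC n = fromBlocks 0 (-1) 1 0 := by
  ext (i|i) (j|j) <;>
    simp [OmgC, Omg, fromBlocks, Matrix.one_apply, apply_ite]

lemma omg_sq (n : ℕ) : Omg n * Omg n = -1 := by
  rw [Omg]; exact omg_sq' n

lemma omgT (n : ℕ) : (Omg n)ᵀ = -(Omg n) := by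
  rw [Omg, fromBlocks_transpose]
  ext (i|i) (j|j) <;> simp [fromBlocks, one_apply]

lemma omgT_mul_omg (n : ℕ) : (Omg n)ᵀ * Omg n = 1 := by
  rw [omgT, Matrix.neg_mul, omg_sq, neg_neg]

/-- Let `L = ker P_{J_L}` be a positive Lagrangian subspace with
associated `Ω`-compatible complex structure `J_L`, and let `S ∈ Sp(2n,ℂ)` be such that
`SL` is positive Lagrangian with associated complex structure `J_{SL}`. Then
`A := Re S − (Im S) J_L` is invertible, `J_{SL} = A J_L A⁻¹`, and with `G_L = ΩJ_L`,
`G_{SL} := ΩJ_{SL}` one has `G_{SL} = ΩAΩᵀ G_L A⁻¹`. -/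
theorem statement12 (n : ℕ) (JL JSL : Matrix (Fin n ⊕ Fin n) (Fin n ⊕ Fin n) ℝ)
    (hJL : JLᵀ * Omg n * JL = Omg n ∧ JL * JL = -1 ∧ (Omg n * JL).PosDef)
    (hJSL : JSLᵀ * Omg n * JSL = Omg n ∧ JSL * JSL = -1 ∧ (Omg n * JSL).PosDef)
    (S : Matrix (Fin n ⊕ Fin n) (Fin n ⊕ Fin n) ℂ)
    (hSsymp : Sᵀ * OmgC n * S = OmgC n)
    (hSL : ∀ z : Fin n ⊕ Fin n → ℂ,
      (∃ w : Fin n ⊕ Fin n → ℂ, PJ JL w = 0 ∧ z = S *ᵥ w) ↔ PJ JSL z = 0) :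
    IsUnit (matRe S - matIm S * JL) ∧
    JSL = (matRe S - matIm S * JL) * JL * (matRe S - matIm S * JL)⁻¹ ∧
    Omg n * JSL =
      Omg n * (matRe S - matIm S * JL) * (Omg n)ᵀ * (Omg n * JL) *
        (matRe S - matIm S * JL)⁻¹ := by
  obtain ⟨-, hJL2, -⟩ := hJL
  set A := matRe S - matIm S * JL with hA
  have hOmgC : OmgC n * OmgC n = -1 := by rw [omgC_eq]; exact omg_sq' n
  have hdetOmg : (OmgC n).det ≠ 0 := by
    intro h0
    have h := congrArg Matrix.det hOmgC
    rw [Matrix.det_mul, h0, mul_zero] at h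
    have : ((-1 : Matrix (Fin n ⊕ Fin n) (Fin n ⊕ Fin n) ℂ)).det ≠ 0 := by
      rw [show (-1 : Matrix (Fin n ⊕ Fin n) (Fin n ⊕ Fin n) ℂ) = -(1 : Matrix _ _ ℂ) from rfl,
        Matrix.det_neg]
      simp
    exact this h.symm
  have hdetS : S.det ≠ 0 := by
    intro h0
    have h := congrArg Matrix.det hSsymp
    rw [Matrix.det_mul, Matrix.det_mul, Matrix.det_transpose, h0] at h
    simp at h
    exact hdetOmg h.symm
  set w : ((Fin n ⊕ Fin n) → ℝ) → ((Fin n ⊕ Fin n) → ℂ) :=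
    fun v i => (↑(-(JL *ᵥ v) i) + (v i) * Complex.I) with hw
  have hwRe : ∀ v, vecRe (w v) = -(JL *ᵥ v) := by
    intro v; funext i; simp [vecRe, hw]
  have hwIm : ∀ v, vecIm (w v) = v := by
    intro v; funext i; simp [vecIm, hw]
  have hPJw : ∀ v, PJ JL (w v) = 0 := by
    intro v; simp [PJ, hwRe, hwIm]
  have hAJL : A * JL = matRe S * JL + matIm S := by
    rw [hA, Matrix.sub_mul, Matrix.mul_assoc, hJL2, mul_neg_one, sub_neg_eq_add]
  have hSwRe : ∀ v, vecRe (S *ᵥ w v) = -((A * JL) *ᵥ v) := by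
    intro v
    rw [vecRe_mulVec, hwRe v, hwIm v, Matrix.mulVec_neg, Matrix.mulVec_mulVec, hAJL,
      Matrix.add_mulVec]
    abel
  have hSwIm : ∀ v, vecIm (S *ᵥ w v) = A *ᵥ v := by
    intro v
    rw [vecIm_mulVec, hwRe v, hwIm v, Matrix.mulVec_neg, Matrix.mulVec_mulVec, hA,
      Matrix.sub_mulVec]
    abel
  have hkey : ∀ v, JSL *ᵥ (A *ᵥ v) = (A * JL) *ᵥ v := by
    intro v
    have hz := (hSL (S *ᵥ w v)).mp ⟨w v, hPJw v, rfl⟩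
    rw [PJ, hSwRe v, hSwIm v] at hz
    funext i
    have h1 := congrFun hz i
    simp only [Pi.add_apply, Pi.neg_apply, Pi.zero_apply] at h1
    linarith
  have hME : JSL * A = A * JL := by
    ext i j
    have := congrFun (hkey (Pi.single j 1)) i
    rw [Matrix.mulVec_mulVec] at this
    simpa [Matrix.mulVec_single] using this
  have hdetA : A.det ≠ 0 := by
    intro h0
    obtain ⟨v, hv, hAv⟩ := (Matrix.exists_mulVec_eq_zero_iff).mpr h0
    have hAJLv : (A * JL) *ᵥ v = 0 := by rw [← hkey, hAv, Matrix.mulVec_zero]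
    have hSw : S *ᵥ w v = 0 := by
      funext i
      have h1 : vecRe (S *ᵥ w v) i = 0 := by rw [hSwRe v]; simp [hAJLv]
      have h2 : vecIm (S *ᵥ w v) i = 0 := by rw [hSwIm v]; simp [hAv]
      exact Complex.ext h1 h2
    have hwv : w v = 0 := by
      have : S⁻¹ *ᵥ (S *ᵥ w v) = S⁻¹ *ᵥ 0 := by rw [hSw]
      rwa [Matrix.mulVec_mulVec, Matrix.nonsing_inv_mul S (isUnit_iff_ne_zero.mpr hdetS),
        Matrix.one_mulVec, Matrix.mulVec_zero] at this
    apply hv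
    have := hwIm v
    rw [hwv] at this
    rw [← this]; funext i; simp [vecIm]
  have hAunit : IsUnit A := (Matrix.isUnit_iff_isUnit_det A).mpr (isUnit_iff_ne_zero.mpr hdetA)
  have hAinv : A * A⁻¹ = 1 := Matrix.mul_nonsing_inv A (isUnit_iff_ne_zero.mpr hdetA)
  have hJSLeq : JSL = A * JL * A⁻¹ := by
    calc JSL = JSL * (A * A⁻¹) := by rw [hAinv, mul_one]
    _ = (JSL * A) * A⁻¹ := by rw [mul_assoc]
    _ = A * JL * A⁻¹ := by rw [hME]
  refine ⟨hAunit, hJSLeq, ?_⟩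
  have hOT : ∀ M : Matrix (Fin n ⊕ Fin n) (Fin n ⊕ Fin n) ℝ,
      (Omg n)ᵀ * (Omg n * M) = M := fun M => by
    rw [← mul_assoc, omgT_mul_omg, one_mul]
  calc Omg n * JSL = Omg n * (A * JL * A⁻¹) := by rw [hJSLeq]
  _ = Omg n * A * ((Omg n)ᵀ * (Omg n * JL)) * A⁻¹ := by
      rw [hOT]; simp only [Matrix.mul_assoc]
  _ = Omg n * A * (Omg n)ᵀ * (Omg n * JL) * A⁻¹ := by simp only [Matrix.mul_assoc]
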